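/- arXiv:1909.13796 — 2 statements merged into one kernel-verified Lean document; each statement's English description precedes it below -/
import Mathlib

section
/- Let M be a trilinear form on the 2-dimensional real inner product space EuclideanSpace ℝ (Fin 2) with standard orthonormal basis (e₁, e₂), and suppose M is symmetric in its last two arguments (M(a,b,c) = M(a,c,b) for all a,b,c) and traceless in its last two arguments (Σᵢ M(a,eᵢ,eᵢ) = 0 for all a). Then M is symmetric in its first two arguments (M(a,b,c) = M(b,a,c) for all a,b,c) if and only if its trace over the first two arguments vanishes (Σᵢ M(eᵢ,eᵢ,c) = 0 for all c). [This is the pointwise algebraic core of the paper's Theorem 1: for a symmetric traceless 2-tensor N on a 2-dimensional surface, the Codazzi condition D_{[A}N_{B]C} = 0 is equivalent to the divergence-free condition D_A N^A{}_B = 0.] -/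
open Finset

/-- The standard orthonormal basis vectors of `EuclideanSpace ℝ (Fin 2)`. -/
noncomputable def stdBasis2 (i : Fin 2) : EuclideanSpace ℝ (Fin 2) :=
  EuclideanSpace.single i (1 : ℝ)

lemma stdBasis2_decomp (v : EuclideanSpace ℝ (Fin 2)) :
    v = v 0 • stdBasis2 0 + v 1 • stdBasis2 1 := by
  ext i
  simp only [stdBasis2, PiLp.add_apply, PiLp.smul_apply, EuclideanSpace.single_apply,
    smul_eq_mul]
  fin_cases i <;> norm_num <;> rfl

/-- For a trilinear form `M` on the 2-dimensional real inner product space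
`EuclideanSpace ℝ (Fin 2)` which is symmetric and traceless in its last two
arguments, `M` is symmetric in its first two arguments if and only if its trace
over the first two arguments vanishes. -/
theorem codazzi_iff_divergence_free
    (M : EuclideanSpace ℝ (Fin 2) →ₗ[ℝ] EuclideanSpace ℝ (Fin 2) →ₗ[ℝ]
          EuclideanSpace ℝ (Fin 2) →ₗ[ℝ] ℝ)
    (hsym : ∀ a b c, M a b c = M a c b)
    (htr : ∀ a, ∑ i : Fin 2, M a (stdBasis2 i) (stdBasis2 i) = 0) :
    (∀ a b c, M a b c = M b a c) ↔
      (∀ c, ∑ i : Fin 2, M (stdBasis2 i) (stdBasis2 i) c = 0) := by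
  constructor
  · intro h c
    calc ∑ i : Fin 2, M (stdBasis2 i) (stdBasis2 i) c
        = ∑ i : Fin 2, M c (stdBasis2 i) (stdBasis2 i) := by
          refine Finset.sum_congr rfl fun i _ => ?_
          rw [hsym, h]
      _ = 0 := htr c
  · intro h
    have htr' : ∀ i : Fin 2, M (stdBasis2 i) (stdBasis2 0) (stdBasis2 0)
        + M (stdBasis2 i) (stdBasis2 1) (stdBasis2 1) = 0 := fun i => by
      simpa [Fin.sum_univ_two] using htr (stdBasis2 i)
    have h' : ∀ k : Fin 2, M (stdBasis2 0) (stdBasis2 0) (stdBasis2 k)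
        + M (stdBasis2 1) (stdBasis2 1) (stdBasis2 k) = 0 := fun k => by
      simpa [Fin.sum_univ_two] using h (stdBasis2 k)
    have hb0 : M (stdBasis2 0) (stdBasis2 1) (stdBasis2 0)
        = M (stdBasis2 1) (stdBasis2 0) (stdBasis2 0) := by
      have e3 := hsym (stdBasis2 0) (stdBasis2 1) (stdBasis2 0)
      have e5 := htr' 1
      have e2 := h' 1
      linarith
    have hb1 : M (stdBasis2 0) (stdBasis2 1) (stdBasis2 1)
        = M (stdBasis2 1) (stdBasis2 0) (stdBasis2 1) := by
      have e1 := htr' 0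
      have e3 := hsym (stdBasis2 1) (stdBasis2 0) (stdBasis2 1)
      have e2 := h' 0
      linarith
    intro a b c
    rw [stdBasis2_decomp a, stdBasis2_decomp b, stdBasis2_decomp c]
    simp only [map_add, map_smul, LinearMap.add_apply, LinearMap.smul_apply,
      smul_eq_mul]
    rw [hb0, hb1]
    ring
end

section
/- Let M be a trilinear form on the 2-dimensional real inner product space EuclideanSpace ℝ (Fin 2) with standard orthonormal basis (e₁, e₂), and suppose M is symmetric in its last two arguments (M(a,b,c) = M(a,c,b) for all a,b,c) and traceless in its last two arguments (Σᵢ M(a,eᵢ,eᵢ) = 0 for all a). Then Σ_{i,j,k} (M(eᵢ,eⱼ,e_k) − M(eⱼ,eᵢ,e_k))² = 2 Σ_k (Σᵢ M(eᵢ,eᵢ,e_k))². [This is the pointwise algebraic identity behind the paper's equation (12), equating the two expressions 4 D^{[M}N^{N]C} D_{[M}N_{N]C} and 2 D_C N^{C}{}_A D_B N^{BA} for the radiant quantity 𝒵 built from a symmetric traceless 2-tensor N on a 2-dimensional surface.] -/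
open Finset

/-- For a trilinear form `M` on the 2-dimensional real inner product space
`EuclideanSpace ℝ (Fin 2)` which is symmetric and traceless in its last two
arguments, the squared antisymmetrisation over the first two indices equals
twice the squared divergence:
`Σ_{i,j,k} (M(eᵢ,eⱼ,e_k) − M(eⱼ,eᵢ,e_k))² = 2 Σ_k (Σᵢ M(eᵢ,eᵢ,e_k))²`. -/
theorem radiant_Z_identity
    (M : EuclideanSpace ℝ (Fin 2) →ₗ[ℝ] EuclideanSpace ℝ (Fin 2) →ₗ[ℝ]
          EuclideanSpace ℝ (Fin 2) →ₗ[ℝ] ℝ)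
    (hsym : ∀ a b c, M a b c = M a c b)
    (htr : ∀ a, ∑ i : Fin 2, M a (stdBasis2 i) (stdBasis2 i) = 0) :
    ∑ i : Fin 2, ∑ j : Fin 2, ∑ k : Fin 2,
        (M (stdBasis2 i) (stdBasis2 j) (stdBasis2 k)
          - M (stdBasis2 j) (stdBasis2 i) (stdBasis2 k)) ^ 2
      = 2 * ∑ k : Fin 2,
          (∑ i : Fin 2, M (stdBasis2 i) (stdBasis2 i) (stdBasis2 k)) ^ 2 := by
  have h0 := htr (stdBasis2 0)
  have h1 := htr (stdBasis2 1)
  simp only [Fin.sum_univ_two] at h0 h1 ⊢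
  have s1 := hsym (stdBasis2 0) (stdBasis2 1) (stdBasis2 0)
  have s2 := hsym (stdBasis2 1) (stdBasis2 1) (stdBasis2 0)
  set a := M (stdBasis2 0) (stdBasis2 0) (stdBasis2 0) with ha
  set b := M (stdBasis2 0) (stdBasis2 0) (stdBasis2 1) with hb
  set c := M (stdBasis2 0) (stdBasis2 1) (stdBasis2 0) with hc
  set d := M (stdBasis2 0) (stdBasis2 1) (stdBasis2 1) with hd
  set e := M (stdBasis2 1) (stdBasis2 0) (stdBasis2 0) with he
  set f := M (stdBasis2 1) (stdBasis2 0) (stdBasis2 1) with hf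
  set g := M (stdBasis2 1) (stdBasis2 1) (stdBasis2 0) with hg
  set h := M (stdBasis2 1) (stdBasis2 1) (stdBasis2 1) with hh
  linear_combination (2*(c - e + b + h))*s1 - (2*(c - e + b + h))*h1
    + (2*(d - f - a - g))*h0 + (2*(d - f - a - g))*s2
end
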